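/- arXiv:0705.1026 — 2 statements merged into one kernel-verified Lean document; each statement's English description precedes it below -/
import Mathlib

section
/- Let a, b : [0,T] → ℝ be continuous, K⁺, K⁻ : [0,T] → ℝ increasing with K⁺(0) = K⁻(0) = 0, and suppose a(t) ≤ b(t) for all t with ∫_0^T (b(t) − a(t)) dK⁻(t) = 0. If Y¹, Y² : [0,T] → ℝ are continuous with a ≤ Y¹, Y² ≤ b, then ∫_0^T (Y¹(t) − Y²(t))⁺ d(K⁻¹(t) − K⁻²(t)) ≥ 0 whenever K⁻¹ increases only on {Y¹ = b} and K⁻² increases only on {Y² = b}. -/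
open Set MeasureTheory

theorem stmt_11 (T : ℝ) (hT : 0 < T) (a b Y₁ Y₂ : ℝ → ℝ)
    (ha : ContinuousOn a (Icc 0 T)) (hb : ContinuousOn b (Icc 0 T))
    (hY₁ : ContinuousOn Y₁ (Icc 0 T)) (hY₂ : ContinuousOn Y₂ (Icc 0 T))
    (hab : ∀ t ∈ Icc 0 T, a t ≤ b t)
    (haY₁ : ∀ t ∈ Icc 0 T, a t ≤ Y₁ t) (hY₁b : ∀ t ∈ Icc 0 T, Y₁ t ≤ b t)
    (haY₂ : ∀ t ∈ Icc 0 T, a t ≤ Y₂ t) (hY₂b : ∀ t ∈ Icc 0 T, Y₂ t ≤ b t)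
    (K₁ K₂ : StieltjesFunction ℝ)
    (hSk₁ : ∫ t in Icc 0 T, (b t - Y₁ t) ∂K₁.measure = 0)
    (hSk₂ : ∫ t in Icc 0 T, (b t - Y₂ t) ∂K₂.measure = 0) :
    0 ≤ (∫ t in Icc 0 T, max (Y₁ t - Y₂ t) 0 ∂K₁.measure) -
        ∫ t in Icc 0 T, max (Y₁ t - Y₂ t) 0 ∂K₂.measure := by
  have hμ := K₂.measure
  -- second integral is zero
  have hint : IntegrableOn (fun t => b t - Y₂ t) (Icc 0 T) K₂.measure :=
    (hb.sub hY₂).integrableOn_compact isCompact_Icc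
  have hnn : 0 ≤ᵐ[K₂.measure.restrict (Icc 0 T)] fun t => b t - Y₂ t := by
    filter_upwards [ae_restrict_mem measurableSet_Icc] with t ht
    simpa using sub_nonneg.2 (hY₂b t ht)
  have hae : (fun t => b t - Y₂ t) =ᵐ[K₂.measure.restrict (Icc 0 T)] 0 :=
    (integral_eq_zero_iff_of_nonneg_ae hnn hint).1 hSk₂
  have hmax : (fun t => max (Y₁ t - Y₂ t) 0)
      =ᵐ[K₂.measure.restrict (Icc 0 T)] 0 := by
    filter_upwards [hae, ae_restrict_mem measurableSet_Icc] with t h1 h2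
    have hb2 : b t = Y₂ t := by linarith [sub_eq_zero.mp h1]
    have : Y₁ t ≤ Y₂ t := hb2 ▸ hY₁b t h2
    simp [max_eq_right, sub_nonpos.2 this]
  have h2 : ∫ t in Icc 0 T, max (Y₁ t - Y₂ t) 0 ∂K₂.measure = 0 := by
    rw [integral_congr_ae hmax]; simp
  have h1 : 0 ≤ ∫ t in Icc 0 T, max (Y₁ t - Y₂ t) 0 ∂K₁.measure :=
    setIntegral_nonneg measurableSet_Icc fun t _ => le_max_right _ _
  linarith
end

section
/- Let Y, L, U : [0,T] → ℝ be continuous with L ≤ Y ≤ U, and K⁺, K⁻ increasing with K⁺(0) = K⁻(0) = 0 satisfying the Skorokhod conditions ∫_0^T (Y_t − L_t) dK⁺_t = 0 and ∫_0^T (Y_t − U_t) dK⁻_t = 0. If Y', K'⁺, K'⁻ is another such system with the same barriers, then ∫_0^T (Y_t − Y'_t) d((K⁺_t − K'⁺_t) − (K⁻_t − K'⁻_t)) ≤ 0. -/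
open Set MeasureTheory

lemma aux_ae_zero (T : ℝ) (μ : Measure ℝ) [IsLocallyFiniteMeasure μ] (f : ℝ → ℝ)
    (hf : ContinuousOn f (Icc 0 T)) (hf0 : ∀ t ∈ Icc 0 T, 0 ≤ f t)
    (h : ∫ t in Icc 0 T, f t ∂μ = 0) :
    ∀ᵐ t ∂μ.restrict (Icc 0 T), f t = 0 := by
  have hint : IntegrableOn f (Icc 0 T) μ := hf.integrableOn_compact isCompact_Icc
  have hae : 0 ≤ᵐ[μ.restrict (Icc 0 T)] f := by
    filter_upwards [ae_restrict_mem measurableSet_Icc] with t ht using hf0 t ht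
  have := (integral_eq_zero_iff_of_nonneg_ae hae hint).mp h
  filter_upwards [this] with t ht using ht

theorem stmt_12 (T : ℝ) (hT : 0 < T) (L U Y Y' : ℝ → ℝ)
    (hL : ContinuousOn L (Icc 0 T)) (hU : ContinuousOn U (Icc 0 T))
    (hY : ContinuousOn Y (Icc 0 T)) (hY' : ContinuousOn Y' (Icc 0 T))
    (hLY : ∀ t ∈ Icc 0 T, L t ≤ Y t) (hYU : ∀ t ∈ Icc 0 T, Y t ≤ U t)
    (hLY' : ∀ t ∈ Icc 0 T, L t ≤ Y' t) (hY'U : ∀ t ∈ Icc 0 T, Y' t ≤ U t)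
    (Kp Km Kp' Km' : StieltjesFunction ℝ)
    (hSkp : ∫ t in Icc 0 T, (Y t - L t) ∂Kp.measure = 0)
    (hSkm : ∫ t in Icc 0 T, (U t - Y t) ∂Km.measure = 0)
    (hSkp' : ∫ t in Icc 0 T, (Y' t - L t) ∂Kp'.measure = 0)
    (hSkm' : ∫ t in Icc 0 T, (U t - Y' t) ∂Km'.measure = 0) :
    ((∫ t in Icc 0 T, (Y t - Y' t) ∂Kp.measure) -
      ∫ t in Icc 0 T, (Y t - Y' t) ∂Kp'.measure) -
    ((∫ t in Icc 0 T, (Y t - Y' t) ∂Km.measure) -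
      ∫ t in Icc 0 T, (Y t - Y' t) ∂Km'.measure) ≤ 0 := by
  have h1 : ∀ᵐ t ∂Kp.measure.restrict (Icc 0 T), Y t - L t = 0 :=
    aux_ae_zero T _ _ (hY.sub hL) (fun t ht => sub_nonneg.mpr (hLY t ht)) hSkp
  have h2 : ∀ᵐ t ∂Km.measure.restrict (Icc 0 T), U t - Y t = 0 :=
    aux_ae_zero T _ _ (hU.sub hY) (fun t ht => sub_nonneg.mpr (hYU t ht)) hSkm
  have h3 : ∀ᵐ t ∂Kp'.measure.restrict (Icc 0 T), Y' t - L t = 0 :=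
    aux_ae_zero T _ _ (hY'.sub hL) (fun t ht => sub_nonneg.mpr (hLY' t ht)) hSkp'
  have h4 : ∀ᵐ t ∂Km'.measure.restrict (Icc 0 T), U t - Y' t = 0 :=
    aux_ae_zero T _ _ (hU.sub hY') (fun t ht => sub_nonneg.mpr (hY'U t ht)) hSkm'
  have A : ∫ t in Icc 0 T, (Y t - Y' t) ∂Kp.measure ≤ 0 := by
    apply integral_nonpos_of_ae
    filter_upwards [h1, ae_restrict_mem measurableSet_Icc] with t ht htm
    have := hLY' t htm
    simp only [Pi.zero_apply]
    linarith [sub_eq_zero.mp ht]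
  have B : 0 ≤ ∫ t in Icc 0 T, (Y t - Y' t) ∂Kp'.measure := by
    apply integral_nonneg_of_ae
    filter_upwards [h3, ae_restrict_mem measurableSet_Icc] with t ht htm
    have := hLY t htm
    simp only [Pi.zero_apply]
    linarith [sub_eq_zero.mp ht]
  have C : 0 ≤ ∫ t in Icc 0 T, (Y t - Y' t) ∂Km.measure := by
    apply integral_nonneg_of_ae
    filter_upwards [h2, ae_restrict_mem measurableSet_Icc] with t ht htm
    have := hY'U t htm
    simp only [Pi.zero_apply]
    linarith [sub_eq_zero.mp ht]
  have D : ∫ t in Icc 0 T, (Y t - Y' t) ∂Km'.measure ≤ 0 := by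
    apply integral_nonpos_of_ae
    filter_upwards [h4, ae_restrict_mem measurableSet_Icc] with t ht htm
    have := hYU t htm
    simp only [Pi.zero_apply]
    linarith [sub_eq_zero.mp ht]
  linarith
end
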